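/- With the notation of the two-block LMMSE setup, the error covariance satisfies the recursion: Q − V₂ G Q = (I − T₂ G₂) P₁, where V₂ = Q Gᴴ (K + G Q Gᴴ)⁻¹ is the centralized LMMSE receiver for the stacked system, P₁ = Q − Q G₁ᴴ (K₁ + G₁ Q G₁ᴴ)⁻¹ G₁ Q, and T₂ = P₁ G₂ᴴ (K₂ + G₂ P₁ G₂ᴴ)⁻¹. -/

import Mathlib

open Matrix ComplexOrder

/-- The one-step LMMSE error covariance `Q - Q Gᴴ (Kₙ + G Q Gᴴ)⁻¹ G Q` is positive
semidefinite. -/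
lemma oslp_aux_psd {k m : ℕ} (Q : Matrix (Fin k) (Fin k) ℂ) (G : Matrix (Fin m) (Fin k) ℂ)
    (Kn : Matrix (Fin m) (Fin m) ℂ) (hQ : Q.PosDef) (hK : Kn.PosDef) :
    (Q - Q * Gᴴ * (Kn + G * Q * Gᴴ)⁻¹ * G * Q).PosSemidef := by
  have hA : (Kn + G * Q * Gᴴ).PosDef :=
    hK.add_posSemidef (hQ.posSemidef.mul_mul_conjTranspose_same G)
  haveI : Invertible (Kn + G * Q * Gᴴ) := hA.isUnit.invertible
  have e1 : fromRows (1 : Matrix (Fin m) (Fin m) ℂ) (0 : Matrix (Fin k) (Fin m) ℂ) * Kn *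
      (fromRows (1 : Matrix (Fin m) (Fin m) ℂ) (0 : Matrix (Fin k) (Fin m) ℂ))ᴴ =
      fromBlocks Kn 0 0 0 := by
    rw [conjTranspose_fromRows_eq_fromCols_conjTranspose, fromRows_mul,
      fromRows_mul_fromCols]
    simp
  have e2 : fromRows G (1 : Matrix (Fin k) (Fin k) ℂ) * Q *
      (fromRows G (1 : Matrix (Fin k) (Fin k) ℂ))ᴴ =
      fromBlocks (G * Q * Gᴴ) (G * Q) (Q * Gᴴ) Q := by
    rw [conjTranspose_fromRows_eq_fromCols_conjTranspose, fromRows_mul,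
      fromRows_mul_fromCols]
    simp
  have h1 : (fromBlocks (Kn + G * Q * Gᴴ) (G * Q) (G * Q)ᴴ Q) =
      fromRows (1 : Matrix (Fin m) (Fin m) ℂ) (0 : Matrix (Fin k) (Fin m) ℂ) * Kn *
        (fromRows (1 : Matrix (Fin m) (Fin m) ℂ) (0 : Matrix (Fin k) (Fin m) ℂ))ᴴ
      + fromRows G (1 : Matrix (Fin k) (Fin k) ℂ) * Q *
        (fromRows G (1 : Matrix (Fin k) (Fin k) ℂ))ᴴ := by
    rw [e1, e2, fromBlocks_add, fromBlocks_inj]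
    refine ⟨rfl, by simp, ?_, by simp⟩
    rw [conjTranspose_mul, hQ.1.eq]
    simp
  have hblock : (fromBlocks (Kn + G * Q * Gᴴ) (G * Q) (G * Q)ᴴ Q).PosSemidef := by
    rw [h1]
    exact (hK.posSemidef.mul_mul_conjTranspose_same _).add
      (hQ.posSemidef.mul_mul_conjTranspose_same _)
  have h2 := (PosDef.fromBlocks₁₁ (G * Q) Q hA).mp hblock
  have heq : Q - (G * Q)ᴴ * (Kn + G * Q * Gᴴ)⁻¹ * (G * Q) =
      Q - Q * Gᴴ * (Kn + G * Q * Gᴴ)⁻¹ * G * Q := by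
    rw [conjTranspose_mul, hQ.1.eq]
    simp only [Matrix.mul_assoc]
  rwa [heq] at h2

/-- Sequential error covariance update equals centralized MMSE error covariance. -/
theorem oslp_two_block_error_covariance (K M₁ M₂ : ℕ)
    (Q : Matrix (Fin K) (Fin K) ℂ)
    (G₁ : Matrix (Fin M₁) (Fin K) ℂ) (G₂ : Matrix (Fin M₂) (Fin K) ℂ)
    (K₁ : Matrix (Fin M₁) (Fin M₁) ℂ) (K₂ : Matrix (Fin M₂) (Fin M₂) ℂ)
    (hQ : Q.PosDef) (hK₁ : K₁.PosDef) (hK₂ : K₂.PosDef)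
    (V₂ : Matrix (Fin K) (Fin M₁ ⊕ Fin M₂) ℂ)
    (hV₂ : V₂ = Q * (fromRows G₁ G₂)ᴴ *
      (fromBlocks K₁ 0 0 K₂ + fromRows G₁ G₂ * Q * (fromRows G₁ G₂)ᴴ)⁻¹)
    (P₁ : Matrix (Fin K) (Fin K) ℂ)
    (hP₁ : P₁ = Q - Q * G₁ᴴ * (K₁ + G₁ * Q * G₁ᴴ)⁻¹ * G₁ * Q)
    (T₂ : Matrix (Fin K) (Fin M₂) ℂ)
    (hT₂ : T₂ = P₁ * G₂ᴴ * (K₂ + G₂ * P₁ * G₂ᴴ)⁻¹) :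
    Q - V₂ * fromRows G₁ G₂ * Q = (1 - T₂ * G₂) * P₁ := by
  -- invertibility of the first innovation covariance
  have hA : (K₁ + G₁ * Q * G₁ᴴ).PosDef :=
    hK₁.add_posSemidef (hQ.posSemidef.mul_mul_conjTranspose_same G₁)
  haveI iA : Invertible (K₁ + G₁ * Q * G₁ᴴ) := hA.isUnit.invertible
  -- P₁ is positive semidefinite
  have hP₁psd : P₁.PosSemidef := hP₁ ▸ oslp_aux_psd Q G₁ K₁ hQ hK₁
  -- second innovation covariance is invertible
  have hS₂ : (K₂ + G₂ * P₁ * G₂ᴴ).PosDef :=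
    hK₂.add_posSemidef (hP₁psd.mul_mul_conjTranspose_same G₂)
  haveI iS₂ : Invertible (K₂ + G₂ * P₁ * G₂ᴴ) := hS₂.isUnit.invertible
  -- the Schur complement of the stacked innovation covariance
  have hSchur : (K₂ + G₂ * Q * G₂ᴴ) -
      (G₂ * Q * G₁ᴴ) * ⅟(K₁ + G₁ * Q * G₁ᴴ) * (G₁ * Q * G₂ᴴ) = K₂ + G₂ * P₁ * G₂ᴴ := by
    rw [invOf_eq_nonsing_inv, hP₁]
    simp only [Matrix.mul_sub, Matrix.sub_mul, Matrix.mul_assoc]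
    abel
  haveI iSch : Invertible ((K₂ + G₂ * Q * G₂ᴴ) -
      (G₂ * Q * G₁ᴴ) * ⅟(K₁ + G₁ * Q * G₁ᴴ) * (G₁ * Q * G₂ᴴ)) := iS₂.copy _ hSchur
  haveI iS : Invertible (fromBlocks (K₁ + G₁ * Q * G₁ᴴ) (G₁ * Q * G₂ᴴ)
      (G₂ * Q * G₁ᴴ) (K₂ + G₂ * Q * G₂ᴴ)) := fromBlocks₁₁Invertible _ _ _ _
  -- block decomposition of the stacked innovation covariance
  have hSblocks : fromBlocks K₁ 0 0 K₂ + fromRows G₁ G₂ * Q * fromCols G₁ᴴ G₂ᴴ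
      = fromBlocks (K₁ + G₁ * Q * G₁ᴴ) (G₁ * Q * G₂ᴴ)
        (G₂ * Q * G₁ᴴ) (K₂ + G₂ * Q * G₂ᴴ) := by
    rw [fromRows_mul, fromRows_mul_fromCols, fromBlocks_add]
    simp
  -- explicit inverse of the stacked innovation covariance
  have eA : ⅟(K₁ + G₁ * Q * G₁ᴴ) = (K₁ + G₁ * Q * G₁ᴴ)⁻¹ := invOf_eq_nonsing_inv _
  have eSch : ⅟((K₂ + G₂ * Q * G₂ᴴ) -
      (G₂ * Q * G₁ᴴ) * ⅟(K₁ + G₁ * Q * G₁ᴴ) * (G₁ * Q * G₂ᴴ)) =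
      (K₂ + G₂ * P₁ * G₂ᴴ)⁻¹ := by
    rw [invOf_eq_nonsing_inv, hSchur]
  have hSinv : (fromBlocks (K₁ + G₁ * Q * G₁ᴴ) (G₁ * Q * G₂ᴴ)
      (G₂ * Q * G₁ᴴ) (K₂ + G₂ * Q * G₂ᴴ))⁻¹ =
      fromBlocks
        ((K₁ + G₁ * Q * G₁ᴴ)⁻¹ + (K₁ + G₁ * Q * G₁ᴴ)⁻¹ * (G₁ * Q * G₂ᴴ) *
          (K₂ + G₂ * P₁ * G₂ᴴ)⁻¹ * (G₂ * Q * G₁ᴴ) * (K₁ + G₁ * Q * G₁ᴴ)⁻¹)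
        (-((K₁ + G₁ * Q * G₁ᴴ)⁻¹ * (G₁ * Q * G₂ᴴ) * (K₂ + G₂ * P₁ * G₂ᴴ)⁻¹))
        (-((K₂ + G₂ * P₁ * G₂ᴴ)⁻¹ * (G₂ * Q * G₁ᴴ) * (K₁ + G₁ * Q * G₁ᴴ)⁻¹))
        ((K₂ + G₂ * P₁ * G₂ᴴ)⁻¹) := by
    rw [← invOf_eq_nonsing_inv, invOf_fromBlocks₁₁_eq, eSch, eA]
  -- put everything together
  rw [hV₂, hT₂, conjTranspose_fromRows_eq_fromCols_conjTranspose, hSblocks, hSinv,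
    mul_fromCols, fromCols_mul_fromBlocks, fromCols_mul_fromRows, hP₁]
  simp only [Matrix.mul_add, Matrix.add_mul, Matrix.mul_sub, Matrix.sub_mul,
    Matrix.neg_mul, Matrix.mul_neg, Matrix.one_mul, Matrix.mul_one, Matrix.mul_assoc]
  abel
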